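/- Let A = [−1,1]^d with the uniform probability distribution, and define α̃(a) = max(1 − 2Σᵢ|aᵢ|, 0). Then ∫_A α̃(a)² dP(a) ≤ 2^{−d}, while α̃(0) = 1. Consequently any constant M satisfying α̃(0)² ≤ M ‖α̃‖²_{L²(P)} must satisfy M ≥ 2^d. -/

import Mathlib

open MeasureTheory

/-- On `A = [−1,1]^d` with the uniform distribution `P`, the function
`α̃(a) = max(1 − 2Σᵢ|aᵢ|, 0)` satisfies `∫ α̃² dP ≤ 2^{−d}` and `α̃(0) = 1`; hence any
`M` with `α̃(0)² ≤ M ‖α̃‖²_{L²(P)}` must satisfy `M ≥ 2^d`. -/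
theorem stmt_11 (d : ℕ) (P : Measure (Fin d → ℝ))
    (hP : P = (ENNReal.ofReal ((2 : ℝ) ^ d))⁻¹ •
      (volume.restrict {a : Fin d → ℝ | ∀ i, |a i| ≤ 1}))
    (α : (Fin d → ℝ) → ℝ)
    (hα : α = fun a => max (1 - ∑ i, 2 * |a i|) 0) :
    (∫ a, (α a) ^ 2 ∂P ≤ 1 / 2 ^ d) ∧ α 0 = 1 ∧
      ∀ M : ℝ, (α 0) ^ 2 ≤ M * ∫ a, (α a) ^ 2 ∂P → (2 : ℝ) ^ d ≤ M := by
  set S : Set (Fin d → ℝ) := {a | ∀ i, |a i| ≤ 1} with hS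
  set C : Set (Fin d → ℝ) := Set.univ.pi fun _ : Fin d => Set.Icc (-(1/2) : ℝ) (1/2) with hC
  have hCmeas : MeasurableSet C := MeasurableSet.univ_pi fun _ => measurableSet_Icc
  have hSeq : S = Set.univ.pi fun _ : Fin d => Set.Icc (-1 : ℝ) 1 := by
    ext a
    simp only [hS, Set.mem_setOf_eq, Set.mem_univ_pi, Set.mem_Icc, abs_le]
  have hCS : C ⊆ S := by
    rw [hSeq]
    intro a ha i _
    have := ha i (Set.mem_univ i)
    simp only [Set.mem_Icc] at this ⊢
    constructor <;> linarith [this.1, this.2]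
  have hvolC : volume C = 1 := by
    rw [hC, volume_pi_pi]
    simp [Real.volume_Icc]
    norm_num
  have hαnn : ∀ a, 0 ≤ α a := by intro a; rw [hα]; exact le_max_right _ _
  have hα1 : ∀ a, α a ≤ 1 := by
    intro a; rw [hα]
    apply max_le _ zero_le_one
    have : 0 ≤ ∑ i, 2 * |a i| := Finset.sum_nonneg fun i _ => by positivity
    linarith
  have hkey : ∀ a, (α a) ^ 2 ≤ C.indicator (fun _ => (1 : ℝ)) a := by
    intro a
    by_cases h : a ∈ C
    · rw [Set.indicator_of_mem h]
      calc (α a) ^ 2 ≤ 1 ^ 2 := by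
            apply pow_le_pow_left₀ (hαnn a) (hα1 a)
        _ = 1 := one_pow 2
    · rw [Set.indicator_of_notMem h]
      have : α a = 0 := by
        simp only [hC, Set.mem_pi, Set.mem_univ, forall_true_left, Set.mem_Icc, not_forall] at h
        obtain ⟨i, hi⟩ := h
        have habs : (1/2 : ℝ) < |a i| := by
          rcases not_and_or.mp hi with h' | h'
          · push_neg at h'
            calc (1/2:ℝ) < -(a i) := by linarith
              _ ≤ |a i| := neg_le_abs _
          · push_neg at h'
            calc (1/2:ℝ) < a i := by linarith
              _ ≤ |a i| := le_abs_self _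
        have hsum : 2 * |a i| ≤ ∑ j, 2 * |a j| :=
          Finset.single_le_sum (f := fun j => 2 * |a j|) (fun j _ => by positivity)
            (Finset.mem_univ i)
        rw [hα]
        simp only
        apply max_eq_right
        linarith
      rw [this]; norm_num
  have hcont : Continuous fun a : Fin d → ℝ => (α a) ^ 2 := by
    rw [hα]
    exact ((continuous_const.sub (continuous_finset_sum _ fun i _ =>
      continuous_const.mul (continuous_apply i).abs)).max continuous_const).pow 2
  have hfin : volume.restrict S C < ⊤ := by
    rw [Measure.restrict_apply hCmeas, Set.inter_eq_self_of_subset_left hCS, hvolC]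
    exact ENNReal.one_lt_top
  have hintInd : Integrable (C.indicator fun _ => (1:ℝ)) (volume.restrict S) := by
    rw [integrable_indicator_iff hCmeas]
    exact (integrableOn_const_iff).mpr (Or.inr hfin)
  have hintα : Integrable (fun a => (α a) ^ 2) (volume.restrict S) := by
    apply Integrable.mono' hintInd (hcont.aestronglyMeasurable)
    filter_upwards with a
    rw [Real.norm_eq_abs, abs_of_nonneg (by positivity)]
    exact hkey a
  have hIle : ∫ a, (α a) ^ 2 ∂(volume.restrict S) ≤ 1 := by
    calc ∫ a, (α a) ^ 2 ∂(volume.restrict S)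
        ≤ ∫ a, C.indicator (fun _ => (1:ℝ)) a ∂(volume.restrict S) :=
          integral_mono hintα hintInd hkey
      _ = ((volume.restrict S) C).toReal := by
          rw [integral_indicator hCmeas]
          simp [Measure.restrict_restrict hCmeas]
          rw [Measure.restrict_apply hCmeas]
          rfl
      _ = 1 := by
          rw [Measure.restrict_apply hCmeas, Set.inter_eq_self_of_subset_left hCS, hvolC]
          simp
  have h2d : (0:ℝ) < 2 ^ d := by positivity
  have hIeq : ∫ a, (α a) ^ 2 ∂P = (2 ^ d : ℝ)⁻¹ * ∫ a, (α a) ^ 2 ∂(volume.restrict S) := by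
    rw [hP, integral_smul_measure]
    congr 1
    rw [ENNReal.toReal_inv, ENNReal.toReal_ofReal h2d.le]
  have hInn : 0 ≤ ∫ a, (α a) ^ 2 ∂P := integral_nonneg fun a => by positivity
  have hImain : ∫ a, (α a) ^ 2 ∂P ≤ 1 / 2 ^ d := by
    rw [hIeq, one_div]
    calc (2 ^ d : ℝ)⁻¹ * ∫ a, (α a) ^ 2 ∂(volume.restrict S)
        ≤ (2 ^ d : ℝ)⁻¹ * 1 := by
          apply mul_le_mul_of_nonneg_left hIle (by positivity)
      _ = (2 ^ d : ℝ)⁻¹ := mul_one _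
  have hα0 : α 0 = 1 := by simp [hα]
  refine ⟨hImain, hα0, ?_⟩
  intro M hM
  rw [hα0, one_pow] at hM
  have hM0 : 0 ≤ M := by
    by_contra h
    push_neg at h
    nlinarith
  have h1 : (1:ℝ) ≤ M * (1/2^d) := le_trans hM (mul_le_mul_of_nonneg_left hImain hM0)
  rw [mul_one_div, le_div_iff₀ h2d] at h1
  linarith
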